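/- (Exact point-to-point probability for systematic RLNC, equation (4)) Let N ≥ K ≥ 1 be integers and ε ∈ [0,1]. In the systematic RLNC broadcast model with a single user (L = 1) whose per-row erasure probability is ε, the probability that the user's coding matrix has rank K equals exactly Σ_{m=K}^{N} (1−ε)^m ε^{N−m} Σ_{h=max(0,m−N+K)}^{min(K,m)} C(K,h) C(N−K, m−h) P(m−h, K−h), where C(a,b) is the binomial coefficient. -/

import Mathlib

open scoped Classical

/-- `Pfull q m K` is `P(m,K) = ∏_{i=0}^{K-1} (1 - q^{i-m})`, the probability that a uniformly
random `m × K` matrix over a field with `q` elements has rank `K`. -/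
noncomputable def Pfull (q m K : ℕ) : ℝ :=
  ∏ i ∈ Finset.range K, (1 - (q : ℝ) ^ ((i : ℤ) - (m : ℤ)))

/-- `Prank q μ K i` is `P^(i)(μ,K) = q^{-(μ-i)(K-i)} ∏_{l=0}^{i-1}
(1-q^{l-μ})(1-q^{l-K})/(1-q^{l-i})`, the probability that a uniformly random `μ × K` matrix
over a field with `q` elements has rank `i`. -/
noncomputable def Prank (q μ K i : ℕ) : ℝ :=
  (q : ℝ) ^ (-(((μ : ℤ) - (i : ℤ)) * ((K : ℤ) - (i : ℤ)))) *
    ∏ l ∈ Finset.range i,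
      ((1 - (q : ℝ) ^ ((l : ℤ) - (μ : ℤ))) * (1 - (q : ℝ) ^ ((l : ℤ) - (K : ℤ))) /
        (1 - (q : ℝ) ^ ((l : ℤ) - (i : ℤ))))

/-- The rank of the submatrix of `M` formed by the rows indexed by `U`. -/
noncomputable def rowRank {N K : ℕ} {F : Type*} [Field F]
    (M : Matrix (Fin N) (Fin K) F) (U : Finset (Fin N)) : ℕ :=
  (Matrix.of fun (i : ↥U) (j : Fin K) => M i.val j).rank

/-- The systematic coding matrix: its first `K` rows form the `K × K` identity matrix and
its remaining `N - K` rows are given by `D`. -/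
def sysMatrix (N K : ℕ) {F : Type*} [Field F]
    (D : Matrix (Fin (N - K)) (Fin K) F) : Matrix (Fin N) (Fin K) F :=
  Matrix.of fun k j =>
    if _h : (k : ℕ) < K then (if (k : ℕ) = (j : ℕ) then 1 else 0)
    else D ⟨(k : ℕ) - K, by have hk := k.isLt; omega⟩ j

/-- The probability (in the systematic RLNC model with a single user with per-row erasure
probability `ε`) that the user's coding matrix — the submatrix of `sysMatrix N K D`, where
`D` is uniformly random, formed by the received rows — has rank `K`. -/
noncomputable def sysProb1 (N K : ℕ) (F : Type*) [Field F] [Fintype F] (ε : ℝ) : ℝ :=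
  ∑ D : Matrix (Fin (N - K)) (Fin K) F, ∑ R : Fin N → Bool,
    ((Fintype.card F : ℝ) ^ ((N - K) * K))⁻¹ *
      (∏ k, if R k then (1 - ε) else ε) *
      (if rowRank (sysMatrix N K D) (Finset.univ.filter fun k => R k = true) = K
        then 1 else 0)


open Finset Submodule Classical

section Aux

variable {F : Type*} [Field F]

lemma span_union_single_iff {ι : Type*} (S : Finset (Fin K)) (v : ι → (Fin K → F)) :
    Submodule.span F (Set.range v ∪ ((fun j => Pi.single j (1:F)) '' (S : Set (Fin K)))) = ⊤
      ↔ Submodule.span F (Set.range fun i => (fun j : {j : Fin K // j ∉ S} => v i j.val)) = ⊤ := by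
  set π : (Fin K → F) →ₗ[F] ({j : Fin K // j ∉ S} → F) :=
    LinearMap.funLeft F F Subtype.val with hπ
  have hsurj : Function.Surjective π :=
    LinearMap.funLeft_surjective_of_injective F F _ Subtype.val_injective
  set W := Submodule.span F
      (Set.range v ∪ ((fun j => Pi.single j (1:F)) '' (S : Set (Fin K)))) with hW
  have hker : LinearMap.ker π ≤ W := by
    intro x hx
    have hx0 : ∀ j : Fin K, j ∉ S → x j = 0 := by
      intro j hj
      have := congrFun (LinearMap.mem_ker.mp hx) ⟨j, hj⟩
      simpa [π, LinearMap.funLeft_apply] using this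
    have hxrepr : x = ∑ j ∈ S, x j • (Pi.single j (1:F) : Fin K → F) := by
      funext c
      by_cases hc : c ∈ S
      · rw [Finset.sum_apply]
        rw [Finset.sum_eq_single c]
        · simp
        · intro b hb hbc; simp [Pi.single_apply, hbc.symm]
        · intro h; exact absurd hc h
      · rw [Finset.sum_apply, hx0 c hc]
        symm
        apply Finset.sum_eq_zero
        intro b hb
        have hbc : b ≠ c := fun h => hc (h ▸ hb)
        simp [Pi.single_apply, hbc]
    rw [hxrepr]
    exact Submodule.sum_smul_mem _ _ fun j hj => Submodule.subset_span
      (Or.inr ⟨j, by simpa using hj, rfl⟩)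
  have hmap : Submodule.map π W =
      Submodule.span F (Set.range fun i => (fun j : {j : Fin K // j ∉ S} => v i j.val)) := by
    rw [hW, Submodule.map_span]
    apply le_antisymm
    · rw [Submodule.span_le]
      rintro y ⟨x, hx, rfl⟩
      rcases hx with ⟨i, rfl⟩ | ⟨j, hj, rfl⟩
      · exact Submodule.subset_span ⟨i, rfl⟩
      · have : π (Pi.single j (1:F)) = 0 := by
          funext c
          have : (c : Fin K) ≠ j := fun h => c.prop (h ▸ hj)
          simp [π, LinearMap.funLeft_apply, Pi.single_apply, this]
        rw [this]; exact Submodule.zero_mem _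
    · rw [Submodule.span_le]
      rintro y ⟨i, rfl⟩
      exact Submodule.subset_span ⟨v i, Or.inl ⟨i, rfl⟩, rfl⟩
  constructor
  · intro h
    rw [← hmap, h, Submodule.map_top, LinearMap.range_eq_top]
    exact hsurj
  · intro h
    have : W ⊔ LinearMap.ker π = ⊤ := by
      rw [← Submodule.comap_map_eq, hmap, h, Submodule.comap_top]
    rwa [sup_eq_left.mpr hker] at this

lemma rank_eq_card_iff_span_top {α β : Type*} [Fintype α] [Fintype β] (M : Matrix α β F) :
    M.rank = Fintype.card β ↔ Submodule.span F (Set.range M) = ⊤ := by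
  rw [Matrix.rank_eq_finrank_span_row]
  unfold Matrix.row
  constructor
  · intro h
    apply Submodule.eq_top_of_finrank_eq
    rw [h, Module.finrank_fintype_fun_eq_card]
  · intro h
    rw [h, finrank_top, Module.finrank_fintype_fun_eq_card]


lemma count_restrict {γ δ F' : Type*} [Fintype γ] [Fintype δ] [Fintype F']
    (ι : γ → δ) (hι : Function.Injective ι) (P : (γ → F') → Prop) :
    Nat.card {g : δ → F' // P (g ∘ ι)} =
      Nat.card {f : γ → F' // P f} * Fintype.card F' ^ (Fintype.card δ - Fintype.card γ) := by
  classical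
  set β := {x : δ // x ∉ Set.range ι} with hβ
  have hbij : Function.Bijective (Sum.elim ι (Subtype.val : β → δ)) := by
    constructor
    · rintro (a | a) (b | b) hab
      · simp only [Sum.elim_inl] at hab; exact congrArg Sum.inl (hι hab)
      · exact absurd ⟨a, hab⟩ b.prop
      · exact absurd ⟨b, hab.symm⟩ a.prop
      · exact congrArg Sum.inr (Subtype.ext hab)
    · intro x
      by_cases hx : x ∈ Set.range ι
      · obtain ⟨a, ha⟩ := hx; exact ⟨Sum.inl a, ha⟩
      · exact ⟨Sum.inr ⟨x, hx⟩, rfl⟩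
  set e : γ ⊕ β ≃ δ := Equiv.ofBijective _ hbij with he
  set C : (δ → F') ≃ ((γ → F') × (β → F')) :=
    (Equiv.arrowCongr e.symm (Equiv.refl F')).trans (Equiv.sumArrowEquivProdArrow γ β F') with hCdef
  have hC : ∀ g : δ → F', (C g).1 = g ∘ ι := by
    intro g; funext a; rfl
  have e1 : {g : δ → F' // P (g ∘ ι)} ≃ {p : (γ → F') × (β → F') // P p.1} :=
    C.subtypeEquiv (fun g => by rw [hC])
  have e2 : {p : (γ → F') × (β → F') // P p.1} ≃ {f : γ → F' // P f} × (β → F') :=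
    Equiv.prodSubtypeFstEquivSubtypeProd
  rw [Nat.card_congr (e1.trans e2), Nat.card_prod]
  congr 1
  rw [Nat.card_eq_fintype_card, Fintype.card_fun]
  congr 1
  have h1 : Fintype.card {x : δ // x ∈ Set.range ι} = Fintype.card γ := by
    rw [← Nat.card_eq_fintype_card, ← Nat.card_eq_fintype_card]
    exact Nat.card_range_of_injective hι
  have h2 := Fintype.card_subtype_compl (fun x : δ => x ∈ Set.range ι)
  rw [h1] at h2
  convert h2 using 2

lemma rank_eq_card_iff_linindep {α β : Type*} [Fintype α] [Fintype β] (M : Matrix α β F) :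
    M.rank = Fintype.card β ↔ LinearIndependent F (fun j : β => (fun i => M i j)) := by
  rw [Matrix.rank_eq_finrank_span_cols, linearIndependent_iff_card_eq_finrank_span]
  constructor
  · intro h; rw [Set.finrank]; exact h.symm
  · intro h; rw [Set.finrank] at h; exact h.symm


lemma Pfull_zero_of_lt {q m K : ℕ} (h : m < K) : Pfull q m K = 0 := by
  apply Finset.prod_eq_zero (Finset.mem_range.mpr h)
  simp


lemma single_row {K : ℕ} (a : ℕ) (ha : a < K) :
    (fun c : Fin K => if a = (c : ℕ) then (1:F) else 0) = Pi.single (⟨a, ha⟩ : Fin K) 1 := by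
  funext c
  rw [Pi.single_apply]
  by_cases hc : c = ⟨a, ha⟩
  · subst hc; simp
  · rw [if_neg (fun h => hc (Fin.ext h.symm)), if_neg hc]


variable [Fintype F]

lemma card_rank_real {α β : Type*} [Fintype α] [Fintype β] :
    (Nat.card {M : Matrix α β F // M.rank = Fintype.card β} : ℝ)
      = Pfull (Fintype.card F) (Fintype.card α) (Fintype.card β) *
          (Fintype.card F : ℝ) ^ (Fintype.card α * Fintype.card β) := by
  set q := Fintype.card F with hq
  have hq2 : 2 ≤ q := Fintype.one_lt_card
  have hq1 : 1 ≤ q := le_trans one_le_two hq2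
  have hq0 : (q : ℝ) ≠ 0 := by positivity
  by_cases hab : Fintype.card β ≤ Fintype.card α
  · have e1 : {M : Matrix α β F // M.rank = Fintype.card β}
        ≃ {s : β → (α → F) // LinearIndependent F s} :=
      (Matrix.transposeAddEquiv α β F).toEquiv.subtypeEquiv
        (fun M => rank_eq_card_iff_linindep M)
    have eb : Fin (Fintype.card β) ≃ β := (Fintype.equivFin β).symm
    have e2 : {s : β → (α → F) // LinearIndependent F s}
        ≃ {s : Fin (Fintype.card β) → (α → F) // LinearIndependent F s} :=
      (Equiv.arrowCongr eb (Equiv.refl (α → F))).symm.subtypeEquiv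
        (fun s => (linearIndependent_equiv eb).symm)
    have hcard := card_linearIndependent (K := F) (V := α → F)
      (k := Fintype.card β) (by rw [Module.finrank_fintype_fun_eq_card]; exact hab)
    rw [Nat.card_congr (e1.trans e2), hcard, Module.finrank_fintype_fun_eq_card]
    push_cast [Nat.cast_sub (pow_le_pow_right₀ hq1 (le_trans (le_of_lt (Fin.is_lt _)) hab))]
    rw [Finset.prod_congr rfl (fun (i : Fin (Fintype.card β)) _ => Nat.cast_sub (R := ℝ)
      (pow_le_pow_right₀ (a := Fintype.card F) hq1 (le_trans (le_of_lt (Fin.is_lt i)) hab)))]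
    simp only [Nat.cast_pow]
    rw [← hq]
    rw [Fin.prod_univ_eq_prod_range (fun i => ((q:ℝ)^(Fintype.card α) - (q:ℝ)^i))]
    have hpow : ((q:ℝ)) ^ (Fintype.card α * Fintype.card β)
        = ∏ _i ∈ Finset.range (Fintype.card β), (q:ℝ) ^ (Fintype.card α) := by
      rw [Finset.prod_const, Finset.card_range, ← pow_mul]
    rw [Pfull, hpow, ← Finset.prod_mul_distrib]
    apply Finset.prod_congr rfl
    intro i _
    rw [zpow_sub₀ hq0, zpow_natCast, zpow_natCast, sub_mul, one_mul,
      div_mul_cancel₀ _ (pow_ne_zero _ hq0)]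
  · have : IsEmpty {M : Matrix α β F // M.rank = Fintype.card β} := by
      constructor
      rintro ⟨M, hM⟩
      exact hab (hM ▸ M.rank_le_card_height)
    rw [Nat.card_of_isEmpty, Pfull_zero_of_lt (lt_of_not_ge hab)]
    simp

lemma key (N K : ℕ) (hKN : K ≤ N) (U : Finset (Fin N)) :
    (Nat.card {D : Matrix (Fin (N-K)) (Fin K) F // rowRank (sysMatrix N K D) U = K} : ℝ)
      = Pfull (Fintype.card F) ((U.filter (fun k => K ≤ k.val)).card)
          (K - (U.filter (fun k => k.val < K)).card)
        * (Fintype.card F : ℝ) ^ ((N-K)*K) := by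
  set q := Fintype.card F with hq
  have hq2 : 2 ≤ q := Fintype.one_lt_card
  have hq0 : (q : ℝ) ≠ 0 := by positivity
  set S : Finset (Fin K) :=
    univ.filter (fun j : Fin K => (⟨j.val, lt_of_lt_of_le j.isLt hKN⟩ : Fin N) ∈ U) with hSdef
  set Ud : Finset (Fin N) := U.filter (fun k => K ≤ k.val) with hUd
  set h := (U.filter (fun k => k.val < K)).card with hh
  set t := Ud.card with ht
  -- S.card = h
  have hS : S.card = h := by
    rw [hh, hSdef]
    refine Finset.card_bij' (i := fun j _ => (⟨j.val, lt_of_lt_of_le j.isLt hKN⟩ : Fin N))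
      (j := fun k hk => (⟨k.val, (Finset.mem_filter.mp hk).2⟩ : Fin K)) ?_ ?_ ?_ ?_
    · intro a ha
      simp only [Finset.mem_filter, Finset.mem_univ, true_and] at ha ⊢
      exact ⟨ha, a.isLt⟩
    · intro a ha
      simp only [Finset.mem_filter, Finset.mem_univ, true_and]
      have := (Finset.mem_filter.mp ha).1
      simpa using this
    · intro a ha; exact Fin.ext rfl
    · intro a ha; exact Fin.ext rfl
  have hhK : h ≤ K := by
    rw [← hS]; simpa using Finset.card_le_univ S
  have htNK : t ≤ N - K := by
    rcases Nat.eq_or_lt_of_le hKN with hEq | hLt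
    · have : Ud = ∅ := by
        rw [hUd]
        apply Finset.filter_false_of_mem
        intro k _
        have := k.isLt
        omega
      simp [ht, this]
    · have : t ≤ Fintype.card (Fin (N - K)) := by
        rw [ht]
        have := Finset.card_le_card_of_injOn
          (f := fun k : Fin N => (⟨k.val - K, by have := k.isLt; omega⟩ : Fin (N - K)))
          (fun a _ => Finset.mem_univ _)
          (s := Ud) ?_
        · simpa using this
        · intro a ha b hb hab
          simp only [hUd, Finset.mem_filter, Finset.coe_filter, Set.mem_setOf_eq] at ha hb
          have : a.val - K = b.val - K := congrArg Fin.val hab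
          exact Fin.ext (by omega)
      simpa using this
  -- the projected matrix
  set Cc := {j : Fin K // j ∉ S} with hCc
  have hCcCard : Fintype.card Cc = K - h := by
    rw [show Fintype.card Cc = Fintype.card {j : Fin K // ¬ j ∈ S} from rfl,
      Fintype.card_subtype_compl, Fintype.card_fin, ← hS, Fintype.card_coe]
  have hmemUd : ∀ d : ↥Ud, (d.val.val : ℕ) - K < N - K := by
    intro d
    have hd := Finset.mem_filter.mp d.prop
    have := d.val.isLt
    omega
  have hKled : ∀ d : ↥Ud, K ≤ (d.val.val : ℕ) := fun d => (Finset.mem_filter.mp d.prop).2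
  -- event equivalence
  have hEvent : ∀ D : Matrix (Fin (N-K)) (Fin K) F,
      rowRank (sysMatrix N K D) U = K ↔
        (Matrix.of fun (d : ↥Ud) (c : Cc) => D ⟨d.val.val - K, hmemUd d⟩ c.val).rank
          = Fintype.card Cc := by
    intro D
    rw [rowRank]
    have h1 : (Matrix.of fun (i : ↥U) (j : Fin K) => sysMatrix N K D i.val j).rank = K
        ↔ Submodule.span F
            (Set.range fun (i : ↥U) (j : Fin K) => sysMatrix N K D i.val j) = ⊤ := by
      have := rank_eq_card_iff_span_top
        (Matrix.of fun (i : ↥U) (j : Fin K) => sysMatrix N K D i.val j)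
      rwa [Fintype.card_fin] at this
    set v : ↥Ud → (Fin K → F) := fun d => fun j => D ⟨d.val.val - K, hmemUd d⟩ j with hv
    have hrange : (Set.range fun (i : ↥U) (j : Fin K) => sysMatrix N K D i.val j)
        = Set.range v ∪ ((fun j => Pi.single j (1:F)) '' (S : Set (Fin K))) := by
      ext x
      constructor
      · rintro ⟨u, rfl⟩
        by_cases hu : (u.val.val : ℕ) < K
        · right
          refine ⟨⟨u.val.val, hu⟩, ?_, ?_⟩
          · simp only [hSdef, Finset.coe_filter, Set.mem_setOf_eq, Finset.mem_univ, true_and]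
            simpa using u.prop
          · funext c
            simp only [sysMatrix, Matrix.of_apply, dif_pos hu]
            exact (congrFun (single_row _ hu) c).symm
        · left
          refine ⟨⟨u.val, Finset.mem_filter.mpr ⟨u.prop, le_of_not_gt hu⟩⟩, ?_⟩
          funext c
          simp only [hv, sysMatrix, Matrix.of_apply, dif_neg hu]
      · rintro (⟨d, rfl⟩ | ⟨j, hj, rfl⟩)
        · refine ⟨⟨d.val, Finset.mem_of_mem_filter _ d.prop⟩, ?_⟩
          funext c
          simp only [hv, sysMatrix, Matrix.of_apply,
            dif_neg (not_lt.mpr (hKled d))]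
        · simp only [hSdef, Finset.coe_filter, Set.mem_setOf_eq, Finset.mem_univ, true_and] at hj
          refine ⟨⟨⟨j.val, lt_of_lt_of_le j.isLt hKN⟩, hj⟩, ?_⟩
          funext c
          simp only [sysMatrix, Matrix.of_apply, dif_pos j.isLt]
          exact congrFun (single_row _ j.isLt).symm c |>.symm
    have h2 := span_union_single_iff (F := F) S v
    have h3 : (Matrix.of fun (d : ↥Ud) (c : Cc) => D ⟨d.val.val - K, hmemUd d⟩ c.val).rank
          = Fintype.card Cc
        ↔ Submodule.span F
            (Set.range fun (d : ↥Ud) => fun (c : Cc) => v d c.val) = ⊤ :=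
      rank_eq_card_iff_span_top _
    rw [h1, hrange, h2, ← h3]
  -- counting
  have hcount : Nat.card {D : Matrix (Fin (N-K)) (Fin K) F // rowRank (sysMatrix N K D) U = K}
      = Nat.card {M : Matrix (↥Ud) Cc F // M.rank = Fintype.card Cc}
          * q ^ ((N-K)*K - t*(K-h)) := by
    set γ := ↥Ud × Cc with hγ
    set ι : γ → Fin (N-K) × Fin K :=
      fun p => (⟨p.1.val.val - K, hmemUd p.1⟩, p.2.val) with hι
    have hιinj : Function.Injective ι := by
      rintro ⟨a1, a2⟩ ⟨b1, b2⟩ hab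
      simp only [hι, Prod.mk.injEq] at hab
      have h1 : a1 = b1 := by
        apply Subtype.ext; apply Fin.ext
        have := congrArg Fin.val hab.1
        simp only at this
        have := hKled a1; have := hKled b1
        omega
      have h2 : a2 = b2 := Subtype.ext hab.2
      rw [h1, h2]
    set P : (γ → F) → Prop :=
      fun f => (Matrix.of (Function.curry f)).rank = Fintype.card Cc with hP
    have e1 : {D : Matrix (Fin (N-K)) (Fin K) F // rowRank (sysMatrix N K D) U = K}
        ≃ {g : (Fin (N-K) × Fin K) → F // P (g ∘ ι)} := by
      refine (Equiv.curry (Fin (N-K)) (Fin K) F).symm.subtypeEquiv (fun D => ?_)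
      rw [hEvent D]
      exact Iff.rfl
    have e2 : {f : γ → F // P f} ≃ {M : Matrix (↥Ud) Cc F // M.rank = Fintype.card Cc} :=
      (Equiv.curry (↥Ud) Cc F).subtypeEquiv (fun f => Iff.rfl)
    rw [Nat.card_congr e1, count_restrict ι hιinj P, Nat.card_congr e2]
    congr 1
    rw [Fintype.card_prod, Fintype.card_fin, Fintype.card_fin,
      Fintype.card_prod, Fintype.card_coe, hCcCard]
  rw [hcount]
  have hcr := card_rank_real (F := F) (α := ↥Ud) (β := Cc)
  rw [Fintype.card_coe, ← hq, ← ht] at hcr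
  rw [Nat.cast_mul, hcr, Nat.cast_pow, hCcCard, mul_assoc, ← pow_add]
  have hle : t * (K - h) ≤ (N - K) * K := Nat.mul_le_mul htNK (Nat.sub_le _ _)
  congr 2
  omega

end Aux

noncomputable def finsetBoolEquiv (n : ℕ) : Finset (Fin n) ≃ (Fin n → Bool) :=
  { toFun := fun s => fun j => decide (j ∈ s)
    invFun := fun R => univ.filter (fun j => R j = true)
    left_inv := by intro s; ext j; simp
    right_inv := by intro R; funext j; simp }

lemma sum_bool_card {n : ℕ} (g : ℕ → ℝ) :
    ∑ R : Fin n → Bool, g ((univ.filter fun j => R j = true).card)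
      = ∑ t ∈ Finset.range (n+1), (n.choose t : ℝ) * g t := by
  rw [← Equiv.sum_comp (finsetBoolEquiv n)
    (fun R => g ((univ.filter fun j => R j = true).card))]
  have hfix : ∀ s : Finset (Fin n),
      (univ.filter fun j => (finsetBoolEquiv n) s j = true) = s := by
    intro s; ext j; simp [finsetBoolEquiv]
  simp only [hfix]
  rw [← Finset.powerset_univ, Finset.sum_powerset_apply_card g]
  simp [Finset.card_univ, mul_comm]

def splitEquiv (N K : ℕ) (hKN : K ≤ N) :
    (Fin N → Bool) ≃ ((Fin K → Bool) × (Fin (N - K) → Bool)) where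
  toFun R := (fun j => R ⟨j.val, lt_of_lt_of_le j.isLt hKN⟩,
              fun i => R ⟨K + i.val, by have := i.isLt; omega⟩)
  invFun p := fun k =>
    if h : k.val < K then p.1 ⟨k.val, h⟩ else p.2 ⟨k.val - K, by have := k.isLt; omega⟩
  left_inv R := by
    funext k
    by_cases h : k.val < K
    · simp only [dif_pos h]
    · simp only [dif_neg h]
      exact congrArg R (Fin.ext (by simp only; omega))
  right_inv p := by
    refine Prod.ext ?_ ?_
    · funext j
      simp only [dif_pos j.isLt]
    · funext i
      have h1 : ¬ (K + i.val < K) := by omega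
      simp only [dif_neg h1]
      exact congrArg p.2 (Fin.ext (by simp only; omega))

lemma hs_eq (N K : ℕ) (hKN : K ≤ N) (R : Fin N → Bool) :
    ((univ.filter fun k : Fin N => R k = true).filter fun k => k.val < K).card
      = (univ.filter fun j : Fin K => R ⟨j.val, lt_of_lt_of_le j.isLt hKN⟩ = true).card := by
  rw [Finset.filter_filter]
  refine (Finset.card_bij' (i := fun (j : Fin K) _ => (⟨j.val, lt_of_lt_of_le j.isLt hKN⟩ : Fin N))
    (j := fun k hk => (⟨k.val, (Finset.mem_filter.mp hk).2.2⟩ : Fin K)) ?_ ?_ ?_ ?_).symm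
  · intro a ha
    simp only [Finset.mem_filter, Finset.mem_univ, true_and] at ha ⊢
    exact ⟨ha, a.isLt⟩
  · intro a ha
    obtain ⟨-, hR, hlt⟩ := Finset.mem_filter.mp ha
    refine Finset.mem_filter.mpr ⟨Finset.mem_univ _, ?_⟩
    have hgen : ∀ (pf : (a.val : ℕ) < N), R ⟨a.val, pf⟩ = true := fun pf => by
      rwa [show (⟨a.val, pf⟩ : Fin N) = a from Fin.ext rfl]
    exact hgen _
  · intro a ha; exact Fin.ext rfl
  · intro a ha; exact Fin.ext rfl

lemma td_eq (N K : ℕ) (R : Fin N → Bool) :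
    ((univ.filter fun k : Fin N => R k = true).filter fun k => K ≤ k.val).card
      = (univ.filter fun i : Fin (N - K) => R ⟨K + i.val, by have := i.isLt; omega⟩ = true).card := by
  rw [Finset.filter_filter]
  refine Finset.card_bij' (i := fun (k : Fin N) hk =>
      (⟨k.val - K, by have := (Finset.mem_filter.mp hk).2.2; have := k.isLt; omega⟩ : Fin (N - K)))
    (j := fun (i : Fin (N - K)) _ => (⟨K + i.val, by have := i.isLt; omega⟩ : Fin N)) ?_ ?_ ?_ ?_
  · intro a ha
    obtain ⟨-, hR, hK⟩ := Finset.mem_filter.mp ha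
    refine Finset.mem_filter.mpr ⟨Finset.mem_univ _, ?_⟩
    have hgen : ∀ (pf : K + ((a.val : ℕ) - K) < N), R ⟨K + (a.val - K), pf⟩ = true := fun pf => by
      rwa [show (⟨K + (a.val - K), pf⟩ : Fin N) = a from Fin.ext (by simp only; omega)]
    exact hgen _
  · intro a ha
    obtain ⟨-, hR⟩ := Finset.mem_filter.mp ha
    refine Finset.mem_filter.mpr ⟨Finset.mem_univ _, hR, by simp only; omega⟩
  · intro a ha
    have := (Finset.mem_filter.mp ha).2.2
    exact Fin.ext (by simp only; omega)
  · intro a ha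
    exact Fin.ext (by simp only; omega)

lemma weight (N : ℕ) (ε : ℝ) (R : Fin N → Bool) :
    (∏ k : Fin N, if R k then (1 - ε) else ε)
      = (1 - ε) ^ ((univ.filter fun k : Fin N => R k = true).card)
          * ε ^ (N - (univ.filter fun k : Fin N => R k = true).card) := by
  rw [Finset.prod_ite]
  rw [Finset.prod_const, Finset.prod_const]
  rw [Finset.filter_not, Finset.card_sdiff_of_subset (Finset.filter_subset _ _),
    Finset.card_univ, Fintype.card_fin]

lemma final_reindex (N K : ℕ) (hKN : K ≤ N) (q : ℕ) (ε : ℝ) :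
    ∑ h ∈ Finset.range (K+1), ∑ t ∈ Finset.range (N-K+1),
        (K.choose h : ℝ) * ((N-K).choose t : ℝ)
          * ((1-ε)^(h+t) * ε^(N-(h+t)) * Pfull q t (K-h))
      = ∑ m ∈ Finset.Icc K N, (1 - ε) ^ m * ε ^ (N - m) *
          ∑ h ∈ Finset.Icc (m + K - N) (min K m),
            (K.choose h : ℝ) * ((N - K).choose (m - h) : ℝ) * Pfull q (m - h) (K - h) := by
  have hL : ∑ h ∈ Finset.range (K+1), ∑ t ∈ Finset.range (N-K+1),
        (K.choose h : ℝ) * ((N-K).choose t : ℝ)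
          * ((1-ε)^(h+t) * ε^(N-(h+t)) * Pfull q t (K-h))
      = ∑ p ∈ (Finset.range (K+1)) ×ˢ (Finset.range (N-K+1)),
          (K.choose p.1 : ℝ) * ((N-K).choose p.2 : ℝ)
            * ((1-ε)^(p.1+p.2) * ε^(N-(p.1+p.2)) * Pfull q p.2 (K-p.1)) := by
    rw [Finset.sum_product]
  have hR : ∑ m ∈ Finset.Icc K N, (1 - ε) ^ m * ε ^ (N - m) *
          ∑ h ∈ Finset.Icc (m + K - N) (min K m),
            (K.choose h : ℝ) * ((N - K).choose (m - h) : ℝ) * Pfull q (m - h) (K - h)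
      = ∑ x ∈ (Finset.Icc K N).sigma (fun m => Finset.Icc (m + K - N) (min K m)),
          (1 - ε) ^ x.1 * ε ^ (N - x.1) *
            ((K.choose x.2 : ℝ) * ((N - K).choose (x.1 - x.2) : ℝ)
              * Pfull q (x.1 - x.2) (K - x.2)) := by
    rw [Finset.sum_sigma]
    apply Finset.sum_congr rfl
    intro m _
    rw [Finset.mul_sum]
  rw [hL, hR]
  rw [← Finset.sum_filter_add_sum_filter_not
    ((Finset.range (K+1)) ×ˢ (Finset.range (N-K+1))) (fun p => K ≤ p.1 + p.2)]
  have hzero : ∑ p ∈ ((Finset.range (K+1)) ×ˢ (Finset.range (N-K+1))).filter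
      (fun p => ¬ K ≤ p.1 + p.2),
        (K.choose p.1 : ℝ) * ((N-K).choose p.2 : ℝ)
          * ((1-ε)^(p.1+p.2) * ε^(N-(p.1+p.2)) * Pfull q p.2 (K-p.1)) = 0 := by
    apply Finset.sum_eq_zero
    intro p hp
    have := (Finset.mem_filter.mp hp).2
    rw [Pfull_zero_of_lt (by omega)]
    ring
  rw [hzero, add_zero]
  refine Finset.sum_nbij' (i := fun p => (⟨p.1 + p.2, p.1⟩ : (m : ℕ) × ℕ))
    (j := fun x => (x.2, x.1 - x.2)) ?_ ?_ ?_ ?_ ?_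
  · intro p hp
    simp only [Finset.mem_filter, Finset.mem_product, Finset.mem_range] at hp
    simp only [Finset.mem_sigma, Finset.mem_Icc, le_min_iff]
    omega
  · intro x hx
    simp only [Finset.mem_sigma, Finset.mem_Icc, le_min_iff] at hx
    simp only [Finset.mem_filter, Finset.mem_product, Finset.mem_range]
    omega
  · intro p hp
    have h2 : p.1 + p.2 - p.1 = p.2 := by omega
    simp [h2]
  · intro x hx
    simp only [Finset.mem_sigma, Finset.mem_Icc, le_min_iff] at hx
    refine Sigma.ext ?_ ?_ <;> simp only
    · omega
    · exact heq_of_eq (by omega)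
  · intro p hp
    simp only
    rw [Nat.add_sub_cancel_left]
    ring


/-- exact point-to-point probability for systematic RLNC, equation (4):
the single-user success probability equals
`Σ_{m=K}^{N} (1-ε)^m ε^{N-m} Σ_{h=max(0,m-N+K)}^{min(K,m)} C(K,h) C(N-K,m-h) P(m-h,K-h)`. -/
theorem stmt13 (q N K : ℕ) (hq : 2 ≤ q) (hK : 0 < K) (hKN : K ≤ N)
    (F : Type*) [Field F] [Fintype F] (hF : Fintype.card F = q)
    (ε : ℝ) (hε : ε ∈ Set.Icc (0 : ℝ) 1) :
    sysProb1 N K F ε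
      = ∑ m ∈ Finset.Icc K N, (1 - ε) ^ m * ε ^ (N - m) *
          ∑ h ∈ Finset.Icc (m + K - N) (min K m),
            (K.choose h : ℝ) * ((N - K).choose (m - h) : ℝ) * Pfull q (m - h) (K - h) := by
  classical
  have hcF : Fintype.card F = q := hF
  have hqR : (0:ℝ) < (q:ℝ) := by
    have : 0 < q := by omega
    exact_mod_cast this
  have hX : ((q:ℝ)) ^ ((N-K)*K) ≠ 0 := by positivity
  -- Step 1: reduce the D-sum using the key counting lemma
  have step1 : sysProb1 N K F ε
      = ∑ R : Fin N → Bool,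
          (∏ k : Fin N, if R k then (1-ε) else ε)
            * Pfull q (((univ.filter fun k : Fin N => R k = true).filter
                  fun k => K ≤ k.val).card)
                (K - ((univ.filter fun k : Fin N => R k = true).filter
                  fun k => k.val < K).card) := by
    rw [sysProb1, Finset.sum_comm]
    apply Finset.sum_congr rfl
    intro R _
    rw [← Finset.mul_sum]
    have hsum : ∑ D : Matrix (Fin (N-K)) (Fin K) F,
        (if rowRank (sysMatrix N K D) (univ.filter fun k => R k = true) = K
          then (1:ℝ) else 0)
        = ((Nat.card {D : Matrix (Fin (N-K)) (Fin K) F //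
            rowRank (sysMatrix N K D) (univ.filter fun k => R k = true) = K}) : ℝ) := by
      rw [Finset.sum_boole, Nat.card_eq_fintype_card, Fintype.card_subtype]
    rw [hsum, key N K hKN (univ.filter fun k => R k = true), hcF]
    field_simp
  rw [step1]
  -- Step 2: rewrite the weight and the counts
  have step2 : ∀ R : Fin N → Bool,
      (∏ k : Fin N, if R k then (1-ε) else ε)
        * Pfull q (((univ.filter fun k : Fin N => R k = true).filter
              fun k => K ≤ k.val).card)
            (K - ((univ.filter fun k : Fin N => R k = true).filter
              fun k => k.val < K).card)
      = (fun p : (Fin K → Bool) × (Fin (N-K) → Bool) =>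
          (1-ε) ^ ((univ.filter fun j => p.1 j = true).card
              + (univ.filter fun i => p.2 i = true).card)
            * ε ^ (N - ((univ.filter fun j => p.1 j = true).card
              + (univ.filter fun i => p.2 i = true).card))
            * Pfull q ((univ.filter fun i => p.2 i = true).card)
                (K - (univ.filter fun j => p.1 j = true).card))
          (splitEquiv N K hKN R) := by
    intro R
    simp only [splitEquiv, Equiv.coe_fn_mk]
    erw [← hs_eq N K hKN R, ← td_eq N K R, weight N ε R]
    have hm : ((univ.filter fun k : Fin N => R k = true).filter
          fun k => k.val < K).card
        + ((univ.filter fun k : Fin N => R k = true).filter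
          fun k => K ≤ k.val).card
        = (univ.filter fun k : Fin N => R k = true).card := by
      have hc : ((univ.filter fun k : Fin N => R k = true).filter
            fun k => K ≤ k.val)
          = ((univ.filter fun k : Fin N => R k = true).filter
            fun k => ¬ k.val < K) := by
        apply Finset.filter_congr
        intro x _
        simp [not_lt]
      rw [hc]
      exact Finset.card_filter_add_card_filter_not _
    rw [← hm]
  rw [Finset.sum_congr rfl (fun R _ => step2 R)]
  rw [Equiv.sum_comp (splitEquiv N K hKN)
    (fun p : (Fin K → Bool) × (Fin (N-K) → Bool) =>
      (1-ε) ^ ((univ.filter fun j => p.1 j = true).card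
          + (univ.filter fun i => p.2 i = true).card)
        * ε ^ (N - ((univ.filter fun j => p.1 j = true).card
          + (univ.filter fun i => p.2 i = true).card))
        * Pfull q ((univ.filter fun i => p.2 i = true).card)
            (K - (univ.filter fun j => p.1 j = true).card))]
  rw [Fintype.sum_prod_type]
  -- Step 3: group by the number of received rows
  have step3 : ∑ R1 : Fin K → Bool, ∑ R2 : Fin (N-K) → Bool,
      (1-ε) ^ ((univ.filter fun j => R1 j = true).card
          + (univ.filter fun i => R2 i = true).card)
        * ε ^ (N - ((univ.filter fun j => R1 j = true).card
          + (univ.filter fun i => R2 i = true).card))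
        * Pfull q ((univ.filter fun i => R2 i = true).card)
            (K - (univ.filter fun j => R1 j = true).card)
      = ∑ h ∈ Finset.range (K+1), ∑ t ∈ Finset.range (N-K+1),
          (K.choose h : ℝ) * ((N-K).choose t : ℝ)
            * ((1-ε)^(h+t) * ε^(N-(h+t)) * Pfull q t (K-h)) := by
    rw [sum_bool_card (fun h => ∑ R2 : Fin (N-K) → Bool,
      (1-ε) ^ (h + (univ.filter fun i => R2 i = true).card)
        * ε ^ (N - (h + (univ.filter fun i => R2 i = true).card))
        * Pfull q ((univ.filter fun i => R2 i = true).card) (K - h))]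
    apply Finset.sum_congr rfl
    intro h _
    rw [sum_bool_card (fun t => (1-ε)^(h+t) * ε^(N-(h+t)) * Pfull q t (K-h)),
      Finset.mul_sum]
    apply Finset.sum_congr rfl
    intro t _
    ring
  rw [step3]
  exact final_reindex N K hKN q ε
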